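/- arXiv:2509.00847 — 4 statements merged into one kernel-verified Lean document; each statement's English description precedes it below -/
import Mathlib

section
/- Let d ≥ 1, τ > 0, let A : ℝ → ℝ^{d×d} be continuous and τ-periodic, and let U : ℝ → ℝ^{d×d} be a principal matrix solution of A. Then there exists a differentiable, τ-periodic, not identically zero function x : ℝ → ℝ^d with x'(t) = A(t)x(t) for all t ∈ ℝ if and only if det(I − U(τ)) = 0. -/
attribute [local instance] Matrix.normedAddCommGroup Matrix.normedSpace

open Set

/-- Uniqueness for linear ODEs `f' = B t (f t)` with continuous coefficient. -/
lemma linear_ODE_unique {E : Type*} [NormedAddCommGroup E] [NormedSpace ℝ E]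
    (B : ℝ → E →L[ℝ] E) (hB : Continuous B) {f g : ℝ → E}
    (hf : ∀ t, HasDerivAt f (B t (f t)) t)
    (hg : ∀ t, HasDerivAt g (B t (g t)) t)
    (h0 : f 0 = g 0) (t : ℝ) : f t = g t := by
  set a : ℝ := -(|t| + 1) with ha
  set b : ℝ := |t| + 1 with hb
  have habs : (0:ℝ) ≤ |t| := abs_nonneg t
  have hab0 : (0:ℝ) ∈ Ioo a b := ⟨by simp [ha]; linarith, by simp [hb]; linarith⟩
  set clamp : ℝ → ℝ := fun s => max a (min b s) with hclampdef
  have hclampmem : ∀ s, clamp s ∈ Icc a b := by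
    intro s
    refine ⟨le_max_left _ _, max_le (by simp [ha, hb]; linarith) (min_le_left _ _)⟩
  have hclampeq : ∀ s ∈ Ioo a b, clamp s = s := by
    intro s hs
    simp only [hclampdef]
    rw [min_eq_right hs.2.le, max_eq_right hs.1.le]
  obtain ⟨C, hC⟩ := (isCompact_Icc : IsCompact (Icc a b)).exists_bound_of_continuousOn
    hB.continuousOn
  have hC0 : 0 ≤ C := le_trans (norm_nonneg _) (hC a ⟨le_rfl, by simp [ha, hb]; linarith⟩)
  have hlip : ∀ s : ℝ, LipschitzOnWith C.toNNReal (fun x => B (clamp s) x)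
      ((fun _ : ℝ => (univ : Set E)) s) := by
    intro s
    refine ((B (clamp s)).lipschitz.weaken ?_).lipschitzOnWith
    rw [← NNReal.coe_le_coe, coe_nnnorm, Real.coe_toNNReal _ hC0]
    exact hC _ (hclampmem s)
  have key := ODE_solution_unique_of_mem_Icc (v := fun s x => B (clamp s) x)
    (s := fun _ => (univ : Set E)) (fun s _ => hlip s) hab0
    (fun s _ => (hf s).continuousAt.continuousWithinAt)
    (fun s hs => by
      show HasDerivAt f (B (clamp s) (f s)) s
      rw [hclampeq s hs]; exact hf s)
    (fun _ _ => trivial)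
    (fun s _ => (hg s).continuousAt.continuousWithinAt)
    (fun s hs => by
      show HasDerivAt g (B (clamp s) (g s)) s
      rw [hclampeq s hs]; exact hg s)
    (fun _ _ => trivial) h0
  exact key ⟨by simp [ha]; linarith [neg_abs_le t], by simp [hb]; linarith [le_abs_self t]⟩

variable {d : ℕ}

/-- `mulVec` as a continuous linear map in the matrix, with fixed vector. -/
noncomputable def mulVecRightCLM (v : Fin d → ℝ) :
    Matrix (Fin d) (Fin d) ℝ →L[ℝ] (Fin d → ℝ) :=
  LinearMap.toContinuousLinearMap
    { toFun := fun M => M.mulVec v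
      map_add' := fun M N => Matrix.add_mulVec M N v
      map_smul' := fun c M => Matrix.smul_mulVec c M v }

/-- `mulVec` as a continuous-linear-map-valued linear map in the matrix. -/
noncomputable def mulVecCLMₗ :
    Matrix (Fin d) (Fin d) ℝ →ₗ[ℝ] ((Fin d → ℝ) →L[ℝ] (Fin d → ℝ)) where
  toFun M := LinearMap.toContinuousLinearMap M.mulVecLin
  map_add' M N := by ext v i; simp [Matrix.add_mulVec]
  map_smul' c M := by ext v i; simp [Matrix.smul_mulVec]

/-- Left multiplication as a continuous-linear-map-valued linear map. -/
noncomputable def mulLeftCLMₗ :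
    Matrix (Fin d) (Fin d) ℝ →ₗ[ℝ]
      (Matrix (Fin d) (Fin d) ℝ →L[ℝ] Matrix (Fin d) (Fin d) ℝ) where
  toFun M := LinearMap.toContinuousLinearMap (LinearMap.mulLeft ℝ M)
  map_add' M N := by ext X i j; simp [add_mul]
  map_smul' c M := by ext X i j; simp

/-- Right multiplication by a fixed matrix, as a continuous linear map. -/
noncomputable def mulRightCLM (C : Matrix (Fin d) (Fin d) ℝ) :
    Matrix (Fin d) (Fin d) ℝ →L[ℝ] Matrix (Fin d) (Fin d) ℝ :=
  LinearMap.toContinuousLinearMap (LinearMap.mulRight ℝ C)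

/-- For `A` continuous and `τ`-periodic with principal matrix
solution `U`, there exists a differentiable, `τ`-periodic, not identically zero
solution of `x' = A x` iff `det(I − U(τ)) = 0`. -/
theorem stmt_2 (d : ℕ) (hd : 1 ≤ d) (τ : ℝ) (hτ : 0 < τ)
    (A : ℝ → Matrix (Fin d) (Fin d) ℝ) (hA : Continuous A)
    (hAper : ∀ t : ℝ, A (t + τ) = A t)
    (U : ℝ → Matrix (Fin d) (Fin d) ℝ)
    (hU0 : U 0 = 1)
    (hU : ∀ t : ℝ, HasDerivAt U (A t * U t) t) :
    (∃ x : ℝ → Fin d → ℝ,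
      (∀ t : ℝ, HasDerivAt x ((A t).mulVec (x t)) t) ∧
      (∀ t : ℝ, x (t + τ) = x t) ∧
      (∃ t : ℝ, x t ≠ 0)) ↔
    Matrix.det (1 - U τ) = 0 := by
  -- the vector ODE coefficient as a continuous CLM-valued function
  have hBv : Continuous fun t => (mulVecCLMₗ (d := d)) (A t) :=
    mulVecCLMₗ.continuous_of_finiteDimensional.comp hA
  have hBvapp : ∀ t (w : Fin d → ℝ), (mulVecCLMₗ (d := d)) (A t) w = (A t).mulVec w := by
    intro t w; rfl
  -- any `U t *ᵥ v` is a solution of the vector ODE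
  have hsol : ∀ v : Fin d → ℝ, ∀ t : ℝ,
      HasDerivAt (fun s => (U s).mulVec v) ((A t).mulVec ((U t).mulVec v)) t := by
    intro v t
    have := ((mulVecRightCLM v).hasFDerivAt.comp_hasDerivAt t (hU t))
    have h4 : (A t).mulVec ((U t).mulVec v) = mulVecRightCLM v (A t * U t) := by
      rw [Matrix.mulVec_mulVec]; rfl
    rw [h4]; exact this
  constructor
  · rintro ⟨x, hx, hxper, t₀, hxt₀⟩
    -- x t = U t *ᵥ x 0 by uniqueness
    have huniq : ∀ t, x t = (U t).mulVec (x 0) := by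
      intro t
      refine linear_ODE_unique (fun t => (mulVecCLMₗ (d := d)) (A t)) hBv
        (f := x) (g := fun s => (U s).mulVec (x 0)) (fun t => ?_) (fun t => ?_) ?_ t
      · rw [hBvapp]; exact hx t
      · rw [hBvapp]; exact hsol (x 0) t
      · simp [hU0, Matrix.one_mulVec]
    have hx0 : x 0 ≠ 0 := by
      intro h
      apply hxt₀
      rw [huniq t₀, h, Matrix.mulVec_zero]
    rw [← Matrix.exists_mulVec_eq_zero_iff]
    refine ⟨x 0, hx0, ?_⟩
    have hxτ : (U τ).mulVec (x 0) = x 0 := by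
      rw [← huniq τ, ← zero_add τ, hxper 0]
    rw [Matrix.sub_mulVec, Matrix.one_mulVec, hxτ, sub_self]
  · intro hdet
    obtain ⟨v, hv, hMv⟩ := Matrix.exists_mulVec_eq_zero_iff.mpr hdet
    have hUτv : (U τ).mulVec v = v := by
      rw [Matrix.sub_mulVec, Matrix.one_mulVec] at hMv
      exact (sub_eq_zero.mp hMv).symm
    have hBm : Continuous fun t => (mulLeftCLMₗ (d := d)) (A t) :=
      mulLeftCLMₗ.continuous_of_finiteDimensional.comp hA
    have hUper : ∀ t, U (t + τ) = U t * U τ := by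
      intro t
      refine linear_ODE_unique (fun t => (mulLeftCLMₗ (d := d)) (A t)) hBm
        (f := fun s => U (s + τ)) (g := fun s => U s * U τ)
        (fun s => ?_) (fun s => ?_) ?_ t
      · have h1 : HasDerivAt (fun s : ℝ => s + τ) 1 s := (hasDerivAt_id s).add_const τ
        have h2 := (hU (s + τ)).scomp s h1
        have h3 : HasDerivAt (fun s => U (s + τ)) (A s * U (s + τ)) s := by
          simp only [hAper, one_smul] at h2; exact h2
        exact h3
      · have h2 := (mulRightCLM (U τ)).hasFDerivAt.comp_hasDerivAt s (hU s)
        have h3 : HasDerivAt (fun s => U s * U τ) (A s * (U s * U τ)) s := by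
          have h4 : A s * (U s * U τ) = mulRightCLM (U τ) (A s * U s) := by
            rw [← mul_assoc]; rfl
          rw [h4]; exact h2
        exact h3
      · simp [hU0]
    refine ⟨fun t => (U t).mulVec v, fun t => hsol v t, fun t => ?_, ⟨0, ?_⟩⟩
    · show (U (t + τ)).mulVec v = (U t).mulVec v
      rw [hUper t, ← Matrix.mulVec_mulVec, hUτv]
    · simpa [hU0, Matrix.one_mulVec] using hv
end

section
/- Let d ≥ 1, τ > 0, let B, M : ℝ → ℂ^{d×d} be continuous and τ-periodic, let λ ∈ ℂ with λ ≠ 0, and let U : ℝ → ℂ^{d×d} be a principal matrix solution of the matrix function t ↦ λ⁻¹B(t) − M(t). Then there exists a differentiable, τ-periodic, not identically zero function φ : ℝ → ℂ^d satisfying B(t)φ(t) = λ(φ'(t) + M(t)φ(t)) for all t ∈ ℝ if and only if det(I − U(τ)) = 0. -/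
attribute [local instance] Matrix.normedAddCommGroup Matrix.normedSpace

open Set

namespace Stmt3Aux

variable {d : ℕ}

/-- `X ↦ X.mulVec v` as a linear map in the matrix. -/
noncomputable def mulVecRight (v : Fin d → ℂ) :
    Matrix (Fin d) (Fin d) ℂ →ₗ[ℂ] (Fin d → ℂ) where
  toFun X := X.mulVec v
  map_add' X Y := Matrix.add_mulVec X Y v
  map_smul' c X := Matrix.smul_mulVec c X v

lemma hasDerivAt_mulVec {U : ℝ → Matrix (Fin d) (Fin d) ℂ}
    {U' : Matrix (Fin d) (Fin d) ℂ} {t : ℝ} (h : HasDerivAt U U' t) (v : Fin d → ℂ) :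
    HasDerivAt (fun s => (U s).mulVec v) (U'.mulVec v) t := by
  have := (((mulVecRight v).toContinuousLinearMap.restrictScalars ℝ).hasFDerivAt
    (x := U t)).comp_hasDerivAt t h
  exact this

/-- `X ↦ X.mulVecLin` as a linear map into continuous linear maps. -/
noncomputable def mulVecCLM :
    Matrix (Fin d) (Fin d) ℂ →ₗ[ℂ] ((Fin d → ℂ) →L[ℂ] (Fin d → ℂ)) where
  toFun X := X.mulVecLin.toContinuousLinearMap
  map_add' X Y := by
    apply ContinuousLinearMap.ext; intro v
    simp [Matrix.add_mulVec]
  map_smul' c X := by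
    apply ContinuousLinearMap.ext; intro v
    simp [Matrix.smul_mulVec]

@[simp] lemma mulVecCLM_apply (X : Matrix (Fin d) (Fin d) ℂ) (v : Fin d → ℂ) :
    mulVecCLM X v = X.mulVec v := rfl

/-- Uniqueness of solutions of a linear ODE with continuous coefficients. -/
lemma lin_ode_unique {A : ℝ → Matrix (Fin d) (Fin d) ℂ} (hA : Continuous A)
    {f g : ℝ → Fin d → ℂ}
    (hf : ∀ t, HasDerivAt f ((A t).mulVec (f t)) t)
    (hg : ∀ t, HasDerivAt g ((A t).mulVec (g t)) t)
    {t₀ : ℝ} (h0 : f t₀ = g t₀) : f = g := by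
  funext t
  set a : ℝ := min t t₀ - 1 with ha
  set b : ℝ := max t t₀ + 1 with hb
  have hab : a < b := by
    have h1 : min t t₀ ≤ max t t₀ := le_trans (min_le_left _ _) (le_max_left _ _)
    simp only [ha, hb]; linarith
  have ht0 : t₀ ∈ Ioo a b := by
    constructor
    · have := min_le_right t t₀; simp only [ha]; linarith
    · have := le_max_right t t₀; simp only [hb]; linarith
  have htmem : t ∈ Icc a b := by
    constructor
    · have := min_le_left t t₀; simp only [ha]; linarith
    · have := le_max_left t t₀; simp only [hb]; linarith
  -- continuous family of continuous linear maps
  set N : ℝ → ((Fin d → ℂ) →L[ℂ] (Fin d → ℂ)) := fun s => mulVecCLM (A s) with hN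
  have hNc : Continuous N :=
    ((mulVecCLM (d := d)).continuous_of_finiteDimensional).comp hA
  obtain ⟨C, hC⟩ : ∃ C, ∀ s ∈ Icc a b, ‖N s‖ ≤ C :=
    (isCompact_Icc).exists_bound_of_continuousOn hNc.continuousOn
  -- truncated vector field, globally Lipschitz
  set v : ℝ → (Fin d → ℂ) → (Fin d → ℂ) :=
    fun s x => N (projIcc a b hab.le s) x with hv
  have hlip : ∀ s, LipschitzWith C.toNNReal (v s) := by
    intro s
    apply (N (projIcc a b hab.le s)).lipschitz.weaken
    have hmem := (projIcc a b hab.le s).2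
    have := hC _ hmem
    rw [← norm_toNNReal]
    exact Real.toNNReal_mono this
  have key : EqOn f g (Icc a b) := by
    apply ODE_solution_unique_of_mem_Icc
      (K := C.toNNReal) (v := v) (s := fun _ => univ)
      (fun s _ => (hlip s).lipschitzOnWith) ht0
      (fun s _ => (hf s).continuousAt.continuousWithinAt) ?_ (fun _ _ => trivial)
      (fun s _ => (hg s).continuousAt.continuousWithinAt) ?_ (fun _ _ => trivial) h0
    · intro s hs
      have : v s (f s) = (A s).mulVec (f s) := by
        simp [hv, hN, projIcc_of_mem hab.le (Ioo_subset_Icc_self hs)]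
      rw [this]; exact hf s
    · intro s hs
      have : v s (g s) = (A s).mulVec (g s) := by
        simp [hv, hN, projIcc_of_mem hab.le (Ioo_subset_Icc_self hs)]
      rw [this]; exact hg s
  exact key htmem

end Stmt3Aux

open Stmt3Aux

/-- For `B, M` continuous `τ`-periodic complex matrix functions,
`λ ≠ 0`, and `U` the principal matrix solution of `t ↦ λ⁻¹ B(t) − M(t)`, the
generalized eigenvalue problem `B φ = λ(φ' + M φ)` has a differentiable,
`τ`-periodic, not identically zero solution iff `det(I − U(τ)) = 0`. -/
theorem stmt_3 (d : ℕ) (hd : 1 ≤ d) (τ : ℝ) (hτ : 0 < τ)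
    (B M : ℝ → Matrix (Fin d) (Fin d) ℂ)
    (hB : Continuous B) (hM : Continuous M)
    (hBper : ∀ t : ℝ, B (t + τ) = B t) (hMper : ∀ t : ℝ, M (t + τ) = M t)
    (lam : ℂ) (hlam : lam ≠ 0)
    (U : ℝ → Matrix (Fin d) (Fin d) ℂ)
    (hU0 : U 0 = 1)
    (hU : ∀ t : ℝ, HasDerivAt U ((lam⁻¹ • B t - M t) * U t) t) :
    (∃ (φ φd : ℝ → Fin d → ℂ),
      (∀ t : ℝ, HasDerivAt φ (φd t) t) ∧
      (∀ t : ℝ, φ (t + τ) = φ t) ∧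
      (∃ t : ℝ, φ t ≠ 0) ∧
      (∀ t : ℝ, (B t).mulVec (φ t) = lam • (φd t + (M t).mulVec (φ t)))) ↔
    Matrix.det (1 - U τ) = 0 := by
  set A : ℝ → Matrix (Fin d) (Fin d) ℂ := fun t => lam⁻¹ • B t - M t with hA
  have hAcont : Continuous A := (hB.const_smul lam⁻¹).sub hM
  have hAper : ∀ t, A (t + τ) = A t := fun t => by simp [hA, hBper t, hMper t]
  -- mulVec identity for A
  have hAmul : ∀ t (x : Fin d → ℂ),
      (A t).mulVec x = lam⁻¹ • (B t).mulVec x - (M t).mulVec x := by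
    intro t x
    simp [hA, Matrix.sub_mulVec, Matrix.smul_mulVec]
  -- the equivalence between the eigen equation and the ODE
  have hEq : ∀ (φ φd : ℝ → Fin d → ℂ) (t : ℝ),
      ((B t).mulVec (φ t) = lam • (φd t + (M t).mulVec (φ t))) ↔
      φd t = (A t).mulVec (φ t) := by
    intro φ φd t
    rw [hAmul]
    constructor
    · intro h
      rw [h]
      simp only [smul_add, smul_smul, inv_mul_cancel₀ hlam, one_smul]
      abel
    · intro h
      rw [h, sub_add_cancel, smul_smul, mul_inv_cancel₀ hlam, one_smul]
  constructor
  · rintro ⟨φ, φd, hφ', hφper, ⟨t₁, ht₁⟩, heq⟩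
    have hode : ∀ t, HasDerivAt φ ((A t).mulVec (φ t)) t := by
      intro t
      have := (hEq φ φd t).mp (heq t)
      rw [← this]; exact hφ' t
    set g : ℝ → Fin d → ℂ := fun t => (U t).mulVec (φ 0) with hg
    have hgode : ∀ t, HasDerivAt g ((A t).mulVec (g t)) t := by
      intro t
      have := hasDerivAt_mulVec (hU t) (φ 0)
      simpa [hg, ← Matrix.mulVec_mulVec] using this
    have hfg : φ = g :=
      lin_ode_unique hAcont hode hgode (t₀ := 0)
        (show φ 0 = (U 0).mulVec (φ 0) by rw [hU0, Matrix.one_mulVec])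
    have hφ0 : φ 0 ≠ 0 := by
      intro h
      apply ht₁
      rw [hfg]
      simp [hg, h, Matrix.mulVec_zero]
    have hτeq : (U τ).mulVec (φ 0) = φ 0 := by
      have h1 : φ τ = φ 0 := by simpa using hφper 0
      have h2 : φ τ = (U τ).mulVec (φ 0) := congrFun hfg τ
      rw [← h2]; exact h1
    rw [← Matrix.exists_mulVec_eq_zero_iff]
    refine ⟨φ 0, hφ0, ?_⟩
    rw [Matrix.sub_mulVec, Matrix.one_mulVec, hτeq, sub_self]
  · intro hdet
    obtain ⟨v, hv, hveq⟩ := Matrix.exists_mulVec_eq_zero_iff.mpr hdet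
    have hfix : (U τ).mulVec v = v := by
      have := hveq
      rw [Matrix.sub_mulVec, Matrix.one_mulVec, sub_eq_zero] at this
      exact this.symm
    set φ : ℝ → Fin d → ℂ := fun t => (U t).mulVec v with hφ
    have hode : ∀ t, HasDerivAt φ ((A t).mulVec (φ t)) t := by
      intro t
      have := hasDerivAt_mulVec (hU t) v
      simpa [hφ, ← Matrix.mulVec_mulVec] using this
    have hper : ∀ t, φ (t + τ) = φ t := by
      have : (fun t => φ (t + τ)) = φ := by
        apply lin_ode_unique hAcont ?_ hode (t₀ := 0)
        · show (U (0 + τ)).mulVec v = (U 0).mulVec v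
          rw [zero_add, hU0, Matrix.one_mulVec, hfix]
        · intro t
          have h1 : HasDerivAt (fun s => φ (s + τ)) ((A (t + τ)).mulVec (φ (t + τ))) t := by
            have := (hode (t + τ)).scomp t ((hasDerivAt_id t).add_const τ)
            simpa [Function.comp_def] using this
          rwa [hAper t] at h1
      intro t; exact congrFun this t
    refine ⟨φ, fun t => (A t).mulVec (φ t), hode, hper, ⟨0, ?_⟩, ?_⟩
    · simpa [hφ, hU0, Matrix.one_mulVec] using hv
    · intro t
      exact (hEq φ (fun t => (A t).mulVec (φ t)) t).mpr rfl
end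

section
/- Let d ≥ 1, τ > 0, q > 0, γ > 0, μ > 0, P_1, …, P_d > 0, and let f : ℝ → ℝ be continuous, strictly positive, and τ-periodic. Define c_j(t) := P_j f(t) and the matrix B(t) ∈ ℝ^{d×d} with entries B_{jk}(t) := q c_j(t)c_k(t)P_k / (Σ_{h=1}^d c_h(t)P_h). Set R₀ := (1/(γ+μ)) Σ_{k=1}^d (1/τ)∫_0^τ B_{kk}(θ) dθ, and define φ : ℝ → ℝ^d by φ_j(t) := P_j · exp((1/R₀)∫_0^t Σ_{k=1}^d B_{kk}(θ) dθ − (γ+μ)t). Then R₀ > 0, φ is continuously differentiable, τ-periodic, has strictly positive components, and satisfies B(t)φ(t) = R₀(φ'(t) + (γ+μ)φ(t)) for all t ∈ ℝ. -/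
open scoped BigOperators

/-- For the multi-group SIR model with contact rates
`c_j(t) = P_j f(t)`, the number `R₀ = (1/(γ+μ)) Σ_k (1/τ)∫_0^τ B_{kk}` is a
positive generalized eigenvalue of the pair `(B, 𝓜)` (with transition matrix
`(γ+μ)I`), with explicit `C¹`, `τ`-periodic, strictly positive generalized
eigenfunction `φ`. -/
theorem stmt_7 (d : ℕ) (hd : 1 ≤ d) (τ q γ μ : ℝ)
    (hτ : 0 < τ) (hq : 0 < q) (hγ : 0 < γ) (hμ : 0 < μ)
    (P : Fin d → ℝ) (hP : ∀ j, 0 < P j)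
    (f : ℝ → ℝ) (hf : Continuous f) (hfpos : ∀ t : ℝ, 0 < f t)
    (hfper : ∀ t : ℝ, f (t + τ) = f t)
    (c : Fin d → ℝ → ℝ) (hc : ∀ j (t : ℝ), c j t = P j * f t)
    (B : ℝ → Matrix (Fin d) (Fin d) ℝ)
    (hB : ∀ (t : ℝ) (j k : Fin d),
      B t j k = q * c j t * c k t * P k / (∑ h : Fin d, c h t * P h))
    (R₀ : ℝ)
    (hR₀ : R₀ = (1 / (γ + μ)) * ∑ k : Fin d, (1 / τ) * ∫ θ in (0:ℝ)..τ, B θ k k)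
    (φ : ℝ → Fin d → ℝ)
    (hφ : ∀ (t : ℝ) (j : Fin d),
      φ t j = P j * Real.exp
        ((1 / R₀) * (∫ θ in (0:ℝ)..t, ∑ k : Fin d, B θ k k) - (γ + μ) * t)) :
    0 < R₀ ∧ ContDiff ℝ 1 φ ∧ (∀ t : ℝ, φ (t + τ) = φ t) ∧
      (∀ (t : ℝ) (j : Fin d), 0 < φ t j) ∧
      (∀ t : ℝ, (B t).mulVec (φ t) = R₀ • (deriv φ t + (γ + μ) • φ t)) := by
  have hne : (Finset.univ : Finset (Fin d)).Nonempty := by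
    simpa [Finset.univ_nonempty_iff, ← Fin.pos_iff_nonempty] using (show 0 < d by omega)
  set S : ℝ := ∑ h : Fin d, P h ^ 2 with hSdef
  have hS : 0 < S := Finset.sum_pos (fun h _ => pow_pos (hP h) 2) hne
  set T : ℝ := ∑ k : Fin d, P k ^ 3 with hTdef
  have hT : 0 < T := Finset.sum_pos (fun h _ => pow_pos (hP h) 3) hne
  set K : ℝ := q * T / S with hKdef
  have hK : 0 < K := div_pos (mul_pos hq hT) hS
  have hγμ : 0 < γ + μ := add_pos hγ hμ
  -- simplified formula for B
  have hB' : ∀ (t : ℝ) (j k : Fin d), B t j k = q * f t * P j * P k ^ 2 / S := by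
    intro t j k
    have hden : (∑ h : Fin d, c h t * P h) = f t * S := by
      simp only [hc, hSdef, Finset.mul_sum]
      exact Finset.sum_congr rfl fun h _ => by ring
    rw [hB, hden, hc, hc,
      div_eq_div_iff (mul_pos (hfpos t) hS).ne' hS.ne']
    ring
  -- trace of B
  have hg : ∀ t : ℝ, (∑ k : Fin d, B t k k) = K * f t := by
    intro t
    simp only [hB']
    have h1 : (∑ k : Fin d, q * f t * P k * P k ^ 2 / S)
        = (q * f t / S) * ∑ k : Fin d, P k ^ 3 := by
      rw [Finset.mul_sum]
      exact Finset.sum_congr rfl fun k _ => by ring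
    rw [h1, ← hTdef, hKdef]
    field_simp
  have hgcont : Continuous fun θ => ∑ k : Fin d, B θ k k := by
    have h2 : (fun θ => ∑ k : Fin d, B θ k k) = fun θ => K * f θ := funext hg
    rw [h2]; exact continuous_const.mul hf
  have hgint : ∀ a b : ℝ, (∫ θ in a..b, ∑ k : Fin d, B θ k k) =
      K * ∫ θ in a..b, f θ := by
    intro a b
    rw [← intervalIntegral.integral_const_mul]
    exact intervalIntegral.integral_congr (fun θ _ => hg θ)
  set F : ℝ := ∫ θ in (0:ℝ)..τ, f θ with hFdef
  have hF : 0 < F :=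
    intervalIntegral.intervalIntegral_pos_of_pos (hf.intervalIntegrable 0 τ) hfpos hτ
  -- value of R₀
  have hBcont : ∀ j k : Fin d, Continuous fun θ => B θ j k := by
    intro j k
    have h3 : (fun θ => B θ j k) = fun θ => q * f θ * P j * P k ^ 2 / S :=
      funext fun θ => hB' θ j k
    rw [h3]
    exact (((continuous_const.mul hf).mul continuous_const).mul continuous_const).div_const S
  have hswap : (∑ i : Fin d, ∫ θ in (0:ℝ)..τ, B θ i i)
      = ∫ θ in (0:ℝ)..τ, ∑ i : Fin d, B θ i i :=
    (intervalIntegral.integral_finset_sum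
      (fun i _ => (hBcont i i).intervalIntegrable 0 τ)).symm
  have hRval : R₀ = K * F / ((γ + μ) * τ) := by
    rw [hR₀, ← Finset.mul_sum, hswap, hgint]
    field_simp
    exact hFdef.symm
  have hR₀pos : 0 < R₀ := by rw [hRval]; positivity
  -- the exponent and derivative of φ
  set A : ℝ → ℝ :=
    fun t => (1 / R₀) * (∫ θ in (0:ℝ)..t, ∑ k : Fin d, B θ k k) - (γ + μ) * t with hAdef
  have hA' : ∀ t : ℝ, HasDerivAt A ((1 / R₀) * (K * f t) - (γ + μ)) t := by
    intro t
    have h1 := (hgcont.integral_hasStrictDerivAt 0 t).hasDerivAt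
    have h2 := (h1.const_mul (1 / R₀)).sub ((hasDerivAt_id t).const_mul (γ + μ))
    refine h2.congr_deriv ?_
    simp [hg t]
  have hφA : ∀ (t : ℝ) (j : Fin d), φ t j = P j * Real.exp (A t) := fun t j => hφ t j
  have hφder : ∀ t : ℝ, HasDerivAt φ
      (fun j => φ t j * ((1 / R₀) * (K * f t) - (γ + μ))) t := by
    intro t
    rw [hasDerivAt_pi]
    intro j
    have h1 : HasDerivAt (fun s => P j * Real.exp (A s))
        (P j * Real.exp (A t) * ((1 / R₀) * (K * f t) - (γ + μ))) t := by
      have := ((hA' t).exp.const_mul (P j))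
      simpa [mul_assoc] using this
    have heq : (fun s => P j * Real.exp (A s)) = fun s => φ s j :=
      funext fun s => (hφA s j).symm
    rw [heq] at h1
    simpa [hφA t j] using h1
  refine ⟨hR₀pos, ?_, ?_, ?_, ?_⟩
  · -- ContDiff
    rw [contDiff_one_iff_deriv]
    have hdiff : Differentiable ℝ φ := fun t => (hφder t).differentiableAt
    refine ⟨hdiff, ?_⟩
    have hderiv : deriv φ = fun t => fun j => φ t j * ((1 / R₀) * (K * f t) - (γ + μ)) :=
      funext fun t => (hφder t).deriv
    rw [hderiv]
    refine continuous_pi fun j => ?_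
    exact ((continuous_apply j).comp hdiff.continuous).mul
      ((continuous_const.mul (continuous_const.mul hf)).sub continuous_const)
  · -- periodicity
    intro t
    have hKF : (1 / R₀) * (K * F) = (γ + μ) * τ := by
      rw [hRval]; field_simp
    have hsplit : (∫ θ in (0:ℝ)..(t + τ), ∑ k : Fin d, B θ k k) =
        (∫ θ in (0:ℝ)..t, ∑ k : Fin d, B θ k k) +
          ∫ θ in t..(t + τ), ∑ k : Fin d, B θ k k :=
      (intervalIntegral.integral_add_adjacent_intervals
        (hgcont.intervalIntegrable _ _) (hgcont.intervalIntegrable _ _)).symm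
    have hgp : Function.Periodic (fun θ => ∑ k : Fin d, B θ k k) τ := by
      intro s; simp only [hg, hfper s]
    have hper : (∫ θ in t..(t + τ), ∑ k : Fin d, B θ k k) = K * F := by
      rw [hgp.intervalIntegral_add_eq t 0, zero_add]
      exact hgint 0 τ
    funext j
    rw [hφ, hφ]
    congr 1
    rw [hsplit, hper, mul_add, hKF]
    ring_nf
  · -- positivity
    intro t j
    rw [hφ]
    exact mul_pos (hP j) (Real.exp_pos _)
  · -- eigen equation
    intro t
    have hderiv : deriv φ t = fun j => φ t j * ((1 / R₀) * (K * f t) - (γ + μ)) :=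
      (hφder t).deriv
    funext j
    have hLHS : (B t).mulVec (φ t) j = K * f t * φ t j := by
      show (∑ k : Fin d, B t j k * φ t k) = K * f t * φ t j
      calc (∑ k : Fin d, B t j k * φ t k)
          = (q * f t * P j * Real.exp (A t) / S) * ∑ k : Fin d, P k ^ 3 := by
            rw [Finset.mul_sum]
            exact Finset.sum_congr rfl fun k _ => by rw [hB', hφA]; ring
        _ = K * f t * φ t j := by
            rw [← hTdef, hφA t j, hKdef]
            field_simp
    rw [hLHS]
    simp only [Pi.smul_apply, Pi.add_apply, smul_eq_mul, hderiv]
    field_simp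
    ring
end

section
/- Let d ≥ 1, let V(t,s) ∈ ℝ^{d×d}, defined for all real t ≥ s, be an evolutionary system of d×d real matrices such that (t,s) ↦ V(t,s) is continuous on {(t,s) : t ≥ s} and there exist C ≥ 1 and ω ∈ ℝ with ‖V(t,s)‖ ≤ C·e^{ω(t−s)} for all t ≥ s (operator norm induced by the Euclidean norm on ℝ^d). Fix s ≥ 0. Then N_s := sup_{t∈ℝ} ‖V(t+s, t)‖ is finite; for every Bochner-integrable φ : ℝ → ℝ^d the function t ↦ V(t, t−s)φ(t−s) is Bochner-integrable; and sup{ ∫_ℝ |V(t, t−s)φ(t−s)| dt : φ : ℝ → ℝ^d Bochner-integrable with ∫_ℝ |φ(t)| dt ≤ 1 } = N_s. -/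
open MeasureTheory

set_option maxHeartbeats 1000000 in
set_option synthInstance.maxHeartbeats 200000 in
/-- For a continuous, exponentially bounded evolutionary system
of `d × d` real matrices and `s ≥ 0`: `N_s = sup_t ‖V(t+s, t)‖` is finite, the
evolution-semigroup operator `φ ↦ (t ↦ V(t, t−s)φ(t−s))` maps integrable
functions to integrable functions, and its operator norm on `L¹(ℝ, ℝ^d)` equals
`N_s`. -/
theorem stmt_11 (d : ℕ) (hd : 1 ≤ d)
    (V : ℝ → ℝ → Matrix (Fin d) (Fin d) ℝ)
    (hid : ∀ s : ℝ, V s s = 1)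
    (hcomp : ∀ t r s : ℝ, s ≤ r → r ≤ t → V t r * V r s = V t s)
    (hcont : ContinuousOn (fun p : ℝ × ℝ => V p.1 p.2) {p : ℝ × ℝ | p.2 ≤ p.1})
    (C ω : ℝ) (hC : 1 ≤ C)
    (hbound : ∀ t s : ℝ, s ≤ t →
      ‖Matrix.toEuclideanCLM (𝕜 := ℝ) (V t s)‖ ≤ C * Real.exp (ω * (t - s)))
    (s : ℝ) (hs : 0 ≤ s) :
    BddAbove (Set.range fun t : ℝ =>
        ‖Matrix.toEuclideanCLM (𝕜 := ℝ) (V (t + s) t)‖) ∧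
    (∀ φ : ℝ → EuclideanSpace ℝ (Fin d), Integrable φ →
      Integrable (fun t : ℝ => Matrix.toEuclideanCLM (𝕜 := ℝ) (V t (t - s)) (φ (t - s)))) ∧
    sSup {r : ℝ | ∃ φ : ℝ → EuclideanSpace ℝ (Fin d), Integrable φ ∧
        (∫ t : ℝ, ‖φ t‖) ≤ 1 ∧
        r = ∫ t : ℝ, ‖Matrix.toEuclideanCLM (𝕜 := ℝ) (V t (t - s)) (φ (t - s))‖} =
      ⨆ t : ℝ, ‖Matrix.toEuclideanCLM (𝕜 := ℝ) (V (t + s) t)‖ := by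
  classical
  -- the family of operators
  set A : ℝ → (EuclideanSpace ℝ (Fin d) →L[ℝ] EuclideanSpace ℝ (Fin d)) :=
    fun t => Matrix.toEuclideanCLM (𝕜 := ℝ) (V (t + s) t) with hA_def
  -- continuity of `toEuclideanCLM` as a map of finite-dimensional spaces
  have hTE : Continuous
      (fun M : Matrix (Fin d) (Fin d) ℝ => Matrix.toEuclideanCLM (𝕜 := ℝ) M) := by
    exact LinearMap.continuous_of_finiteDimensional
      ({ toFun := fun M => Matrix.toEuclideanCLM (𝕜 := ℝ) M
         map_add' := fun a b => map_add _ a b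
         map_smul' := fun c a => map_smul _ c a } :
        Matrix (Fin d) (Fin d) ℝ →ₗ[ℝ]
          (EuclideanSpace ℝ (Fin d) →L[ℝ] EuclideanSpace ℝ (Fin d)))
  have hVc : Continuous fun t : ℝ => V (t + s) t := by
    have h1 : Continuous (fun t : ℝ => ((t + s, t) : ℝ × ℝ)) := by fun_prop
    exact hcont.comp_continuous h1 (fun t => by
      simp only [Set.mem_setOf_eq]; linarith)
  have hA : Continuous A := hTE.comp hVc
  -- the uniform bound
  set M : ℝ := C * Real.exp (ω * s) with hM_def
  have hM0 : 0 ≤ M := le_of_lt (mul_pos (lt_of_lt_of_le one_pos hC) (Real.exp_pos _))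
  have hMb : ∀ t : ℝ, ‖A t‖ ≤ M := by
    intro t
    have h := hbound (t + s) t (by linarith)
    rw [show t + s - t = s by ring] at h
    rw [hA_def, hM_def]
    exact h
  -- key identity relating the two parametrizations
  have hkey : ∀ t : ℝ, Matrix.toEuclideanCLM (𝕜 := ℝ) (V t (t - s)) = A (t - s) := by
    intro t
    simp [hA_def, sub_add_cancel]
  -- part 1
  have hbdd : BddAbove (Set.range fun t : ℝ => ‖A t‖) := by
    refine ⟨M, ?_⟩
    rintro r ⟨t, rfl⟩
    exact hMb t
  -- generic integrability lemma
  have hint : ∀ ψ : ℝ → EuclideanSpace ℝ (Fin d), Integrable ψ →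
      Integrable (fun τ : ℝ => A τ (ψ τ)) := by
    intro ψ hψ
    have hm : AEStronglyMeasurable (fun τ : ℝ => A τ (ψ τ)) volume := by
      exact (isBoundedBilinearMap_apply.continuous).comp_aestronglyMeasurable
        (hA.aestronglyMeasurable.prodMk hψ.aestronglyMeasurable)
    refine (hψ.norm.const_mul M).mono' hm ?_
    refine Filter.Eventually.of_forall fun τ => ?_
    have h1 : ‖A τ (ψ τ)‖ ≤ ‖A τ‖ * ‖ψ τ‖ := (A τ).le_opNorm _
    have h2 : ‖A τ‖ * ‖ψ τ‖ ≤ M * ‖ψ τ‖ :=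
      mul_le_mul_of_nonneg_right (hMb τ) (norm_nonneg _)
    exact h1.trans h2
  -- part 2
  have hpart2 : ∀ φ : ℝ → EuclideanSpace ℝ (Fin d), Integrable φ →
      Integrable (fun t : ℝ =>
        Matrix.toEuclideanCLM (𝕜 := ℝ) (V t (t - s)) (φ (t - s))) := by
    intro φ hφ
    have : (fun t : ℝ => Matrix.toEuclideanCLM (𝕜 := ℝ) (V t (t - s)) (φ (t - s)))
        = fun t : ℝ => (fun τ : ℝ => A τ (φ τ)) (t - s) := by
      funext t; rw [hkey t]
    rw [this]
    exact (hint φ hφ).comp_sub_right s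
  refine ⟨hbdd, hpart2, ?_⟩
  -- part 3
  set N : ℝ := ⨆ t : ℝ, ‖A t‖ with hN_def
  have hN0 : 0 ≤ N := le_trans (norm_nonneg (A 0)) (le_ciSup hbdd 0)
  set S : Set ℝ := {r : ℝ | ∃ φ : ℝ → EuclideanSpace ℝ (Fin d), Integrable φ ∧
      (∫ t : ℝ, ‖φ t‖) ≤ 1 ∧
      r = ∫ t : ℝ, ‖Matrix.toEuclideanCLM (𝕜 := ℝ) (V t (t - s)) (φ (t - s))‖}
    with hS_def
  have h0S : (0 : ℝ) ∈ S := by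
    refine ⟨fun _ => 0, integrable_zero _ _ _, by simp, ?_⟩
    simp
  -- every element of S is at most N
  have hub : ∀ r ∈ S, r ≤ N := by
    rintro r ⟨φ, hφ, hφ1, rfl⟩
    have hrw : (fun t : ℝ =>
        ‖Matrix.toEuclideanCLM (𝕜 := ℝ) (V t (t - s)) (φ (t - s))‖)
        = fun t : ℝ => (fun τ : ℝ => ‖A τ (φ τ)‖) (t - s) := by
      funext t; rw [hkey t]
    rw [hrw, integral_sub_right_eq_self (fun τ : ℝ => ‖A τ (φ τ)‖) s]
    have hle : (∫ τ : ℝ, ‖A τ (φ τ)‖) ≤ ∫ τ : ℝ, N * ‖φ τ‖ := by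
      refine integral_mono (hint φ hφ).norm (hφ.norm.const_mul N) ?_
      intro τ
      have h1 : ‖A τ (φ τ)‖ ≤ ‖A τ‖ * ‖φ τ‖ := (A τ).le_opNorm _
      have h2 : ‖A τ‖ ≤ N := le_ciSup hbdd τ
      exact h1.trans (mul_le_mul_of_nonneg_right h2 (norm_nonneg _))
    rw [integral_const_mul] at hle
    calc (∫ τ : ℝ, ‖A τ (φ τ)‖) ≤ N * ∫ τ : ℝ, ‖φ τ‖ := hle
      _ ≤ N * 1 := mul_le_mul_of_nonneg_left hφ1 hN0
      _ = N := mul_one N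
  have hSbdd : BddAbove S := ⟨N, hub⟩
  have hSne : S.Nonempty := ⟨0, h0S⟩
  have hS0 : 0 ≤ sSup S := le_csSup hSbdd h0S
  -- sSup S ≤ N
  have hle1 : sSup S ≤ N := csSup_le hSne hub
  -- N ≤ sSup S
  have hle2 : N ≤ sSup S := by
    refine ciSup_le fun t₀ => ?_
    -- claim for unit vectors
    have claim : ∀ y : EuclideanSpace ℝ (Fin d), ‖y‖ = 1 →
        ‖A t₀ y‖ ≤ sSup S := by
      intro y hy
      refine le_of_forall_pos_le_add ?_
      intro δ hδ
      -- continuity of τ ↦ ‖A τ y‖ at t₀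
      have hg : Continuous fun τ : ℝ => ‖A τ y‖ :=
        (hA.clm_apply continuous_const).norm
      obtain ⟨ε', hε', hball⟩ := Metric.continuousAt_iff.mp hg.continuousAt δ hδ
      set ε : ℝ := ε' / 2 with hε_def
      have hε : 0 < ε := by positivity
      have hglb : ∀ τ ∈ Set.Icc t₀ (t₀ + ε), ‖A t₀ y‖ - δ ≤ ‖A τ y‖ := by
        intro τ hτ
        have hd : dist τ t₀ < ε' := by
          rw [Real.dist_eq, abs_of_nonneg (by linarith [hτ.1])]
          have := hτ.2
          linarith
        have := hball hd
        rw [Real.dist_eq, abs_lt] at this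
        linarith [this.1]
      -- test function
      set φ : ℝ → EuclideanSpace ℝ (Fin d) :=
        Set.indicator (Set.Icc t₀ (t₀ + ε)) (fun _ => ε⁻¹ • y) with hφ_def
      have hIccvol : (volume (Set.Icc t₀ (t₀ + ε))).toReal = ε := by
        rw [Real.volume_Icc]
        simp [ENNReal.toReal_ofReal hε.le]
      have hIccfin : volume (Set.Icc t₀ (t₀ + ε)) ≠ ⊤ :=
        (measure_Icc_lt_top).ne
      have hφint : Integrable φ := by
        rw [hφ_def, integrable_indicator_iff measurableSet_Icc]
        exact (integrableOn_const_iff).mpr (Or.inr measure_Icc_lt_top)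
      have hφnorm : (∫ t : ℝ, ‖φ t‖) = 1 := by
        have : (fun t : ℝ => ‖φ t‖)
            = Set.indicator (Set.Icc t₀ (t₀ + ε)) (fun _ => ε⁻¹) := by
          funext t
          rw [hφ_def, norm_indicator_eq_indicator_norm]
          congr 1
          funext u
          rw [norm_smul, hy, Real.norm_eq_abs, abs_of_nonneg (by positivity), mul_one]
        rw [this, integral_indicator measurableSet_Icc, setIntegral_const,
          measureReal_def, hIccvol, smul_eq_mul]
        field_simp
      -- the corresponding element of S
      set r : ℝ := ∫ t : ℝ,
        ‖Matrix.toEuclideanCLM (𝕜 := ℝ) (V t (t - s)) (φ (t - s))‖ with hr_def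
      have hrS : r ∈ S := ⟨φ, hφint, le_of_eq hφnorm, rfl⟩
      -- compute a lower bound on r
      have hrw : (fun t : ℝ =>
          ‖Matrix.toEuclideanCLM (𝕜 := ℝ) (V t (t - s)) (φ (t - s))‖)
          = fun t : ℝ => (fun τ : ℝ => ‖A τ (φ τ)‖) (t - s) := by
        funext t; rw [hkey t]
      have hreq : r = ∫ τ : ℝ, ‖A τ (φ τ)‖ := by
        rw [hr_def, hrw, integral_sub_right_eq_self (fun τ : ℝ => ‖A τ (φ τ)‖) s]
      have hind : (fun τ : ℝ => ‖A τ (φ τ)‖)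
          = Set.indicator (Set.Icc t₀ (t₀ + ε)) (fun τ => ε⁻¹ * ‖A τ y‖) := by
        funext τ
        by_cases hτ : τ ∈ Set.Icc t₀ (t₀ + ε)
        · rw [Set.indicator_of_mem hτ, hφ_def, Set.indicator_of_mem hτ]
          rw [_root_.map_smul, norm_smul, Real.norm_eq_abs, abs_of_nonneg (by positivity)]
        · rw [Set.indicator_of_notMem hτ, hφ_def, Set.indicator_of_notMem hτ]
          simp
      have hgint : IntegrableOn (fun τ : ℝ => ε⁻¹ * ‖A τ y‖)
          (Set.Icc t₀ (t₀ + ε)) := by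
        exact (continuous_const.mul hg).integrableOn_Icc
      have hlow : (‖A t₀ y‖ - δ) ≤ r := by
        rw [hreq, hind, integral_indicator measurableSet_Icc]
        have := setIntegral_ge_of_const_le_real (c := ε⁻¹ * (‖A t₀ y‖ - δ))
          measurableSet_Icc hIccfin
          (fun τ hτ => mul_le_mul_of_nonneg_left (hglb τ hτ) (by positivity))
          hgint
        rw [measureReal_def, hIccvol] at this
        calc ‖A t₀ y‖ - δ = ε⁻¹ * (‖A t₀ y‖ - δ) * ε := by field_simp
          _ ≤ _ := this
      have : r ≤ sSup S := le_csSup hSbdd hrS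
      linarith
    -- from unit vectors to the operator norm
    refine ContinuousLinearMap.opNorm_le_bound' _ hS0 ?_
    intro x hx
    have hx0 : x ≠ 0 := fun h => hx (by simp [h])
    have hnx : (0 : ℝ) < ‖x‖ := norm_pos_iff.mpr hx0
    set y : EuclideanSpace ℝ (Fin d) := ‖x‖⁻¹ • x with hy_def
    have hy : ‖y‖ = 1 := by
      rw [hy_def, norm_smul, Real.norm_eq_abs, abs_of_nonneg (by positivity)]
      field_simp
    have hxy : x = ‖x‖ • y := by
      rw [hy_def, smul_smul]
      field_simp
      rw [one_smul]
    calc ‖A t₀ x‖ = ‖A t₀ (‖x‖ • y)‖ := by rw [← hxy]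
      _ = ‖x‖ * ‖A t₀ y‖ := by
          rw [_root_.map_smul, norm_smul, Real.norm_eq_abs, abs_of_nonneg hnx.le]
      _ ≤ ‖x‖ * sSup S := mul_le_mul_of_nonneg_left (claim y hy) hnx.le
      _ = sSup S * ‖x‖ := mul_comm _ _
  exact le_antisymm hle1 hle2
end
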